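/- arXiv:1302.4921 — 4 statements merged into one kernel-verified Lean document; each statement's English description precedes it below -/
import Mathlib

section
/- For a nonzero parameter a and natural number n, define the Poisson–Charlier polynomial Cₙ(x;a) = ∑_{k=0}^{n} C(n,k) (-1)^{n-k} a^{-k} (x)_k, where (x)_k is the falling factorial. Then as formal power series in t, ∑_{l≥0} Cₙ(l;a) t^l/l! = e^t · ((t-a)/a)^n. -/
open PowerSeries Nat

noncomputable section

/-- The exponential series `e^t ∈ ℚ[[t]]`. -/
def expS : PowerSeries ℚ := PowerSeries.exp ℚ

/-- `log(1+t) = ∑_{k≥1} (-1)^{k+1} t^k / k`. -/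
def logS : PowerSeries ℚ := PowerSeries.mk fun k => if k = 0 then 0 else (-1 : ℚ)^(k+1) / k

/-- `log(1+t)/t = ∑_{k≥0} (-1)^k t^k/(k+1)`. -/
def LtS : PowerSeries ℚ := PowerSeries.mk fun k => (-1 : ℚ)^k / (k+1)

/-- `(e^{bt} - 1)/t`. -/
def ebt (b : ℚ) : PowerSeries ℚ := PowerSeries.mk fun m => b^(m+1) / (m+1)!

/-- Falling factorial `(x)_m = x(x-1)⋯(x-m+1)`. -/
def ff (x : ℚ) (m : ℕ) : ℚ := ∏ i ∈ Finset.range m, (x - i)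

/-- `(1+t)^x = ∑_m (x)_m t^m/m!`. -/
def onePlusPow (x : ℚ) : PowerSeries ℚ := PowerSeries.mk fun m => ff x m / m !

/-- Integer powers of a power series (negative powers via `PowerSeries.inv`). -/
def zp (f : PowerSeries ℚ) : ℤ → PowerSeries ℚ
  | Int.ofNat n => f ^ n
  | Int.negSucc n => f⁻¹ ^ (n + 1)

/-- Stirling numbers of the second kind. -/
def S2 : ℕ → ℕ → ℕ
  | 0, 0 => 1
  | 0, _ + 1 => 0
  | _ + 1, 0 => 0
  | n + 1, k + 1 => (k + 1) * S2 n (k + 1) + S2 n k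

/-- Signed Stirling numbers of the first kind: `(x)_n = ∑_l S1 n l • x^l`. -/
def S1 : ℕ → ℕ → ℤ
  | 0, 0 => 1
  | 0, _ + 1 => 0
  | _ + 1, 0 => 0
  | n + 1, k + 1 => S1 n k - n * S1 n (k + 1)

/-- Bernoulli polynomial of (integer) order `a` evaluated at `x`:
`(t/(e^t-1))^a e^{xt} = ∑_m Bpol a x m • t^m/m!`. -/
def Bpol (a : ℤ) (x : ℚ) (m : ℕ) : ℚ :=
  m ! * PowerSeries.coeff (R := ℚ) m (zp (ebt 1)⁻¹ a * PowerSeries.rescale x expS)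

/-- Bernoulli numbers of order `a`. -/
def Bnum (a : ℤ) (m : ℕ) : ℚ := Bpol a 0 m

/-- Narumi numbers: `(log(1+t)/t)^n = ∑_l Nnum n l • t^l/l!`. -/
def Nnum (n l : ℕ) : ℚ := l ! * PowerSeries.coeff (R := ℚ) l (LtS ^ n)

/-- Narumi polynomials of (integer) order `a`:
`(log(1+t)/t)^a (1+t)^x = ∑_l Npol a x l • t^l/l!`. -/
def Npol (a : ℤ) (x : ℚ) (l : ℕ) : ℚ :=
  l ! * PowerSeries.coeff (R := ℚ) l (zp LtS a * onePlusPow x)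

/-- Bernoulli polynomials of the second kind:
`t(1+t)^x/log(1+t) = ∑_m b2 x m • t^m/m!`. -/
def b2 (x : ℚ) (m : ℕ) : ℚ := m ! * PowerSeries.coeff (R := ℚ) m (onePlusPow x * LtS⁻¹)

/-- Poisson–Charlier polynomial `C_n(x;a)`. -/
def PC (n : ℕ) (x a : ℚ) : ℚ :=
  ∑ k ∈ Finset.range (n + 1), (n.choose k : ℚ) * (-1)^(n - k) * (a⁻¹)^k * ff x k

/-- Generalized binomial coefficient `C(x, m) = (x)_m/m!`. -/
def gchoose (x : ℚ) (m : ℕ) : ℚ := ff x m / m !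

/-- Action of a power series `f(t) = ∑ a_k t^k/k!` on a polynomial:
`f(t) p(x) = ∑_k a_k p^{(k)}(x)/k!` (a finite sum). -/
def act (f : PowerSeries ℚ) (p : Polynomial ℚ) : Polynomial ℚ :=
  ∑ k ∈ Finset.range (p.natDegree + 1),
    PowerSeries.coeff (R := ℚ) k f • (⇑Polynomial.derivative)^[k] p

/-- `e^{xt} ∈ (ℚ[x])[[t]]`. -/
def expPoly : PowerSeries (Polynomial ℚ) :=
  PowerSeries.mk fun k => ((k ! : ℚ)⁻¹) • Polynomial.X ^ k

/-- The Sheffer polynomial sequence attached to an invertible series `f`: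
`f(t) e^{xt} = ∑_n (polyOf f n) t^n/n!`. -/
def polyOf (f : PowerSeries ℚ) (n : ℕ) : Polynomial ℚ :=
  (n ! : ℚ) • PowerSeries.coeff (R := Polynomial ℚ) n (PowerSeries.map Polynomial.C f * expPoly)

/-- `((1-λ)/(e^t-λ))^α`. -/
def FEser (lam : ℚ) (α : ℕ) : PowerSeries ℚ :=
  (PowerSeries.C (R := ℚ) (1 - lam) * (expS - PowerSeries.C (R := ℚ) lam)⁻¹) ^ α

/-- Frobenius–Euler polynomials of order `α`. -/
def FE (lam : ℚ) (α n : ℕ) : Polynomial ℚ := polyOf (FEser lam α) n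

/-- `(2/(e^t+1))^α`. -/
def Eser (α : ℕ) : PowerSeries ℚ := (PowerSeries.C (R := ℚ) 2 * (expS + 1)⁻¹) ^ α

/-- Euler polynomials of order `α`. -/
def Epol (α n : ℕ) : Polynomial ℚ := polyOf (Eser α) n

/-- `((1-λ)/(e^{(λ-1)t}-λ))^α`. -/
def Aser (lam : ℚ) (α : ℕ) : PowerSeries ℚ :=
  (PowerSeries.C (R := ℚ) (1 - lam) *
    (PowerSeries.rescale (lam - 1) expS - PowerSeries.C (R := ℚ) lam)⁻¹) ^ α

/-- Frobenius-type Eulerian polynomials of order `α`. -/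
def Apol (lam : ℚ) (α n : ℕ) : Polynomial ℚ := polyOf (Aser lam α) n

end


lemma ff_nat (l k : ℕ) : ff (l : ℚ) k = (l.descFactorial k : ℚ) := by
  induction k with
  | zero => simp [ff]
  | succ k ih =>
    rw [ff, Finset.prod_range_succ, ← ff, ih, Nat.descFactorial_succ]
    rcases le_or_gt (k+1) l with h | h
    · push_cast [Nat.cast_sub (Nat.le_of_succ_le h)]
      ring
    · rcases Nat.lt_succ_iff_lt_or_eq.mp h with h' | h'
      · rw [Nat.descFactorial_eq_zero_iff_lt.mpr h']; simp
      · subst h'; simp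

theorem stmt2 (a : ℚ) (ha : a ≠ 0) (n : ℕ) :
    PowerSeries.mk (fun l => PC n (l : ℚ) a / l !) =
      expS * ((PowerSeries.X - PowerSeries.C (R := ℚ) a) * PowerSeries.C (R := ℚ) a⁻¹) ^ n := by
  have key : (PowerSeries.X - PowerSeries.C (R := ℚ) a) * PowerSeries.C (R := ℚ) a⁻¹
      = PowerSeries.C (R := ℚ) a⁻¹ * PowerSeries.X + (-1) := by
    rw [sub_mul, ← map_mul, mul_inv_cancel₀ ha, map_one]
    ring
  rw [key, add_pow]
  ext l
  rw [PowerSeries.coeff_mk, Finset.mul_sum, map_sum, PC, Finset.sum_div]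
  apply Finset.sum_congr rfl
  intro k hk
  have : expS * ((PowerSeries.C (R := ℚ) a⁻¹ * PowerSeries.X) ^ k * (-1) ^ (n - k) * (n.choose k : PowerSeries ℚ))
      = PowerSeries.C (R := ℚ) ((n.choose k : ℚ) * (-1)^(n-k) * (a⁻¹)^k) * (expS * PowerSeries.X ^ k) := by
    simp only [mul_pow, map_mul, map_pow, map_natCast, map_neg, map_one]
    ring
  rw [this, PowerSeries.coeff_C_mul, PowerSeries.coeff_mul_X_pow']
  rcases le_or_gt k l with h | h
  · rw [if_pos h, ff_nat]
    simp only [expS, PowerSeries.coeff_exp, Algebra.algebraMap_self, RingHom.id_apply]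
    have hfac : (((l-k)! : ℕ) : ℚ) * (l.descFactorial k : ℚ) = (l ! : ℚ) := by
      exact_mod_cast Nat.factorial_mul_descFactorial h
    have h1 : ((l-k)! : ℚ) ≠ 0 := Nat.cast_ne_zero.mpr (Nat.factorial_ne_zero _)
    have h2 : ((l)! : ℚ) ≠ 0 := Nat.cast_ne_zero.mpr (Nat.factorial_ne_zero _)
    field_simp
    linear_combination (n.choose k : ℚ) * hfac
  · rw [if_neg (not_le.mpr h), ff_nat, Nat.descFactorial_eq_zero_iff_lt.mpr h]
    simp
end

section
/- For every integer n ≥ 1, the formal power series (log(1+t)/t)^n equals n · ∑_{l≥0} (B_l^{(n+l)}/(n+l)) · t^l/l!, where B_l^{(m)} denotes the l-th Bernoulli number of order m (i.e., B_l^{(m)} = B_l^{(m)}(0) with (t/(e^t-1))^m e^{xt} = ∑ B_l^{(m)}(x) t^l/l!). -/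
open PowerSeries Nat

section Aux

open PowerSeries

private lemma constE : constantCoeff (ebt 1) = 1 := by
  rw [← coeff_zero_eq_constantCoeff_apply, ebt, coeff_mk]
  norm_num

private lemma EH : ebt 1 * (ebt 1)⁻¹ = 1 :=
  PowerSeries.mul_inv_cancel _ (by rw [constE]; norm_num)

private lemma constH : constantCoeff (ebt 1)⁻¹ = 1 := by
  rw [PowerSeries.constantCoeff_inv, constE]; norm_num

private lemma Erel : (1 - X) * ebt 1 + X * d⁄dX ℚ (ebt 1) = 1 := by
  ext n
  rcases n with _ | m
  · simp only [coeff_zero_eq_constantCoeff, map_add, map_mul, map_sub, map_one,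
      constantCoeff_X, constE]
    ring
  · rw [map_add, sub_mul, one_mul, map_sub, coeff_succ_X_mul, coeff_succ_X_mul,
      coeff_derivative, ebt]
    simp only [coeff_mk, one_pow, coeff_one, Nat.succ_ne_zero, if_false]
    have h1 : ((m+1)! : ℚ) ≠ 0 := Nat.cast_ne_zero.mpr (Nat.factorial_ne_zero _)
    have h2 : ((m+1+1)! : ℚ) ≠ 0 := Nat.cast_ne_zero.mpr (Nat.factorial_ne_zero _)
    have h3 : ((m+1+1)! : ℚ) = (m+2) * (m+1)! := by
      rw [Nat.factorial_succ]; push_cast; ring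
    rw [h3] at h2 ⊢
    field_simp
    ring

private lemma Frel : (1 + X) * (LtS + X * d⁄dX ℚ LtS) = 1 := by
  have hG : ∀ i : ℕ, coeff i (LtS + X * d⁄dX ℚ LtS) = (-1 : ℚ)^i := by
    intro i
    rcases i with _ | m
    · simp only [map_add, coeff_zero_X_mul, add_zero, LtS, coeff_mk]
      norm_num
    · rw [map_add, coeff_succ_X_mul, coeff_derivative, LtS, coeff_mk]
      push_cast
      have : ((m:ℚ)+1+1) ≠ 0 := by positivity
      field_simp
      ring
  ext n
  rcases n with _ | m
  · rw [add_mul, one_mul, map_add, coeff_zero_X_mul, add_zero, hG]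
    norm_num
  · rw [add_mul, one_mul, map_add, coeff_succ_X_mul, hG, hG]
    simp only [coeff_one, Nat.succ_ne_zero, if_false]
    ring

private lemma natCast_PS (q : ℕ) : ((q : ℚ⟦X⟧)) = C (q : ℚ) := by
  rw [map_natCast]

private lemma hd_pow (f : ℚ⟦X⟧) (k : ℕ) :
    d⁄dX ℚ (f ^ (k+1)) = C ((k:ℚ)+1) * (f ^ k * d⁄dX ℚ f) := by
  rw [Derivation.leibniz_pow, Nat.add_sub_cancel, smul_eq_mul, nsmul_eq_mul, natCast_PS]
  push_cast
  ring

private lemma DHrel : d⁄dX ℚ ((ebt 1)⁻¹) = -(((ebt 1)⁻¹)^2 * d⁄dX ℚ (ebt 1)) := by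
  have hDH : ebt 1 * d⁄dX ℚ ((ebt 1)⁻¹) + (ebt 1)⁻¹ * d⁄dX ℚ (ebt 1) = 0 := by
    have h := congrArg (d⁄dX ℚ) EH
    rwa [Derivation.leibniz, smul_eq_mul, smul_eq_mul, Derivation.map_one_eq_zero] at h
  have hEH : (ebt 1)⁻¹ * ebt 1 = 1 := by rw [mul_comm]; exact EH
  linear_combination (ebt 1)⁻¹ * hDH - (d⁄dX ℚ ((ebt 1)⁻¹)) * hEH

private lemma keyH (k : ℕ) :
    X * d⁄dX ℚ (((ebt 1)⁻¹) ^ (k+1)) =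
      C ((k:ℚ)+1) * ((1 - X) * ((ebt 1)⁻¹) ^ (k+1) - ((ebt 1)⁻¹) ^ (k+2)) := by
  have hEH : (ebt 1)⁻¹ * ebt 1 = 1 := by rw [mul_comm]; exact EH
  rw [hd_pow, DHrel]
  linear_combination (-(C ((k:ℚ)+1)) * ((ebt 1)⁻¹)^(k+2)) * Erel +
    (C ((k:ℚ)+1) * (1 - X) * ((ebt 1)⁻¹)^(k+1)) * hEH

private lemma recB (k j : ℕ) :
    ((k:ℚ)+1) * coeff (j+1) (((ebt 1)⁻¹) ^ (k+2)) =
      ((k:ℚ) - j) * coeff (j+1) (((ebt 1)⁻¹) ^ (k+1)) -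
        ((k:ℚ)+1) * coeff j (((ebt 1)⁻¹) ^ (k+1)) := by
  have h := congrArg (coeff (j+1)) (keyH k)
  rw [coeff_succ_X_mul, coeff_derivative, coeff_C_mul, map_sub, sub_mul, one_mul,
    map_sub, coeff_succ_X_mul] at h
  linarith

private lemma keyF (k : ℕ) :
    (1 + X) * (C ((k:ℚ)+1) * LtS ^ (k+1) + X * d⁄dX ℚ (LtS ^ (k+1))) =
      C ((k:ℚ)+1) * LtS ^ k := by
  rw [hd_pow]
  calc (1 + X) * (C ((k:ℚ)+1) * LtS ^ (k+1) + X * (C ((k:ℚ)+1) * (LtS ^ k * d⁄dX ℚ LtS)))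
      = C ((k:ℚ)+1) * LtS ^ k * ((1 + X) * (LtS + X * d⁄dX ℚ LtS)) := by ring
    _ = C ((k:ℚ)+1) * LtS ^ k := by rw [Frel, mul_one]

private lemma recN (k j : ℕ) :
    ((k:ℚ)+j+2) * coeff (j+1) (LtS ^ (k+1)) + ((k:ℚ)+j+1) * coeff j (LtS ^ (k+1)) =
      ((k:ℚ)+1) * coeff (j+1) (LtS ^ k) := by
  have hG : ∀ i : ℕ, coeff i (C ((k:ℚ)+1) * LtS ^ (k+1) + X * d⁄dX ℚ (LtS ^ (k+1))) =
      ((k:ℚ)+1+i) * coeff i (LtS ^ (k+1)) := by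
    intro i
    rcases i with _ | m
    · rw [map_add, coeff_zero_X_mul, coeff_C_mul]
      push_cast
      ring
    · rw [map_add, coeff_succ_X_mul, coeff_derivative, coeff_C_mul]
      push_cast
      ring
  have h := congrArg (coeff (j+1)) (keyF k)
  rw [add_mul, one_mul, map_add, coeff_succ_X_mul, hG, hG, coeff_C_mul] at h
  push_cast at h ⊢
  linarith

private lemma baseB (l : ℕ) : coeff l (((ebt 1)⁻¹) ^ (l+1)) = (-1 : ℚ)^l := by
  induction l with
  | zero =>
    rw [pow_one, coeff_zero_eq_constantCoeff, constH]
    norm_num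
  | succ j ih =>
    have h := recB j (j+1 - 1)
    rw [Nat.add_sub_cancel] at h
    have hj : ((j:ℚ)+1) ≠ 0 := by positivity
    have : ((j:ℚ)+1) * coeff (j+1) (((ebt 1)⁻¹) ^ (j+2)) = ((j:ℚ)+1) * (-1:ℚ)^(j+1) := by
      rw [h, ih]
      ring
    have := mul_left_cancel₀ hj this
    simpa using this

private lemma main (n : ℕ) (hn : 1 ≤ n) : ∀ l : ℕ,
    ((n:ℚ)+l) * coeff l (LtS ^ n) = (n:ℚ) * coeff l (((ebt 1)⁻¹) ^ (n+l)) := by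
  induction n with
  | zero => omega
  | succ k ih =>
    rcases k with _ | m
    · intro l
      rw [pow_one, LtS, coeff_mk, show (1:ℕ)+l = l+1 from by omega, baseB]
      have hl : ((l:ℚ)+1) ≠ 0 := by positivity
      push_cast
      field_simp
      ring
    · intro l
      induction l with
      | zero =>
        have h1 : coeff 0 (LtS ^ (m+2)) = 1 := by
          rw [coeff_zero_eq_constantCoeff, map_pow]
          have : constantCoeff LtS = 1 := by
            rw [← coeff_zero_eq_constantCoeff, LtS, coeff_mk]; norm_num
          rw [this, one_pow]
        have h2 : coeff 0 (((ebt 1)⁻¹) ^ (m+2+0)) = 1 := by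
          rw [coeff_zero_eq_constantCoeff, map_pow, constH, one_pow]
        rw [h1, h2]
        norm_num
      | succ j ihl =>
        have E1 := recN (m+1) j
        have E2 := ih (by omega) (j+1)
        have E3 := ihl
        have E4 := recB (m+j+1) j
        rw [show m+1+(j+1) = m+j+2 from by omega] at E2
        rw [show m+2+j = m+j+2 from by omega] at E3
        rw [show m+j+1+2 = m+j+3 from by omega, show m+j+1+1 = m+j+2 from by omega] at E4
        rw [show m+2+(j+1) = m+j+3 from by omega]
        have ha : ((m:ℚ)+j+2) ≠ 0 := by positivity
        apply mul_left_cancel₀ ha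
        push_cast at E1 E2 E3 E4 ⊢
        linear_combination ((m:ℚ)+j+2) * E1 + ((m:ℚ)+2) * E2 - ((m:ℚ)+j+2) * E3 -
          ((m:ℚ)+2) * E4

end Aux


theorem stmt3 (n : ℕ) (hn : 1 ≤ n) :
    LtS ^ n = PowerSeries.mk (fun l =>
      (n : ℚ) * (Bnum ((n : ℤ) + l) l / ((n : ℚ) + l)) / l !) := by
  ext l
  rw [PowerSeries.coeff_mk]
  have hz : zp (ebt 1)⁻¹ ((n : ℤ) + l) = ((ebt 1)⁻¹) ^ (n + l) := by
    rw [show ((n:ℤ) + (l:ℤ)) = ((n + l : ℕ) : ℤ) from by push_cast; ring]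
    rfl
  have hresc : PowerSeries.rescale (0:ℚ) expS = 1 := by
    rw [PowerSeries.rescale_zero]
    simp [expS, PowerSeries.constantCoeff_exp]
  have hB : Bnum ((n : ℤ) + l) l = l ! * PowerSeries.coeff l (((ebt 1)⁻¹) ^ (n + l)) := by
    rw [Bnum, Bpol, hz, hresc, mul_one]
  rw [hB]
  have hmain := main n hn l
  have hnl : ((n:ℚ) + l) ≠ 0 := by
    have : (1:ℚ) ≤ (n:ℚ) := by exact_mod_cast hn
    positivity
  have hfac : ((l ! : ℚ)) ≠ 0 := Nat.cast_ne_zero.mpr (Nat.factorial_ne_zero _)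
  field_simp
  linear_combination hmain
end

section
/- For every n ≥ 1, 0 ≤ l ≤ n-1, and any c, the Narumi polynomial of order n satisfies N_l^{(n)}(-cn) = l! · ∑_{k=0}^{l} (n!/(n+k)!) S₁(k+n, n) · C(-nc, l-k), where S₁ is the signed Stirling number of the first kind and C(-nc, l-k) = (-nc)(-nc-1)⋯(-nc-(l-k)+1)/(l-k)! is the generalized binomial coefficient. -/
open PowerSeries Nat

lemma dlogS : (1 + PowerSeries.X) * (PowerSeries.derivative ℚ logS) = 1 := by
  ext m
  rw [add_mul, one_mul, map_add]
  cases m with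
  | zero => simp [coeff_derivative, logS]
  | succ m =>
    rw [coeff_succ_X_mul, coeff_derivative, coeff_derivative, logS]
    simp only [coeff_mk, coeff_one, Nat.succ_ne_zero, if_false]
    have h1 : ((m:ℚ)+1) ≠ 0 := by positivity
    have h2 : ((m:ℚ)+1+1) ≠ 0 := by positivity
    field_simp
    push_cast
    ring

lemma coeff_logS_pow (n m : ℕ) :
    PowerSeries.coeff (R := ℚ) m (logS ^ n) = n ! * S1 m n / m ! := by
  induction n generalizing m with
  | zero =>
    cases m with
    | zero => simp [S1]
    | succ m => simp [S1, coeff_one]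
  | succ n ih =>
    induction m with
    | zero =>
      have : PowerSeries.constantCoeff (R := ℚ) (logS ^ (n+1)) = 0 := by
        rw [map_pow]
        have : PowerSeries.constantCoeff (R := ℚ) logS = 0 := by simp [logS, ← coeff_zero_eq_constantCoeff]
        simp [this]
      rw [coeff_zero_eq_constantCoeff, this]
      simp [S1]
    | succ m ihm =>
      have key : (1 + PowerSeries.X) * (PowerSeries.derivative ℚ (logS ^ (n+1)))
          = ((n:ℚ)+1) • logS ^ n := by
        rw [Derivation.leibniz_pow, Nat.add_sub_cancel, smul_eq_mul,
          ← Nat.cast_smul_eq_nsmul ℚ]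
        push_cast
        rw [mul_smul_comm]
        congr 1
        rw [mul_comm (logS ^ n), ← mul_assoc, dlogS, one_mul]
      have hc := congrArg (PowerSeries.coeff (R := ℚ) m) key
      rw [add_mul, one_mul, map_add, map_smul, coeff_derivative, ih] at hc
      cases m with
      | zero =>
        rw [coeff_zero_X_mul] at hc
        have hS : S1 1 (n+1) = S1 0 n := by simp [S1]
        rw [hS, Nat.factorial_one, Nat.factorial_succ]
        simp only [smul_eq_mul, Nat.factorial_zero, Nat.cast_one, div_one, Nat.cast_zero,
          zero_add, mul_one, add_zero] at hc
        push_cast at hc ⊢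
        linear_combination hc
      | succ m =>
        rw [coeff_succ_X_mul, coeff_derivative, ihm] at hc
        have hS : (S1 (m+2) (n+1) : ℚ) = S1 (m+1) n - (m+1) * S1 (m+1) (n+1) := by
          rw [show S1 (m+1+1) (n+1) = S1 (m+1) n - (m+1) * S1 (m+1) (n+1) from rfl]
          push_cast; ring
        have hf1 : ((m+1)! : ℚ) ≠ 0 := by positivity
        have hf2 : ((m+2)! : ℚ) ≠ 0 := by positivity
        have hfact : ((m+2)! : ℚ) = (m+2) * (m+1)! := by
          rw [show m+2 = (m+1)+1 from rfl, Nat.factorial_succ]; push_cast; ring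
        have hfn : ((n+1)! : ℚ) = (n+1) * n ! := by rw [Nat.factorial_succ]; push_cast; ring
        rw [show ((m:ℕ)+1+1) = m+2 from rfl, eq_div_iff hf2, hfact, hS, hfn]
        rw [hfn] at hc
        simp only [smul_eq_mul] at hc
        field_simp at hc
        rw [show m+1+1 = m+2 from rfl] at hc
        push_cast at hc
        linear_combination hc

lemma logS_eq_X_mul : logS = PowerSeries.X * LtS := by
  ext m
  cases m with
  | zero => simp [logS, LtS]
  | succ m =>
    rw [coeff_succ_X_mul, logS, LtS]
    simp only [coeff_mk, Nat.succ_ne_zero, if_false]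
    push_cast
    rw [show ((-1:ℚ))^(m+1+1) = (-1)^m by ring]

lemma coeff_LtS_pow (n k : ℕ) :
    PowerSeries.coeff (R := ℚ) k (LtS ^ n) = n ! * S1 (k + n) n / (k + n)! := by
  have h := coeff_logS_pow n (k + n)
  rw [logS_eq_X_mul, mul_pow, PowerSeries.coeff_X_pow_mul] at h
  exact h

theorem stmt9 (n : ℕ) (hn : 1 ≤ n) (l : ℕ) (hl : l < n) (c : ℚ) :
    Npol (n : ℤ) (-(c * n)) l =
      l ! * ∑ k ∈ Finset.range (l + 1),
        (n ! : ℚ) / (n + k)! * S1 (k + n) n * gchoose (-((n : ℚ) * c)) (l - k) := by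
  have hzp : zp LtS (n : ℤ) = LtS ^ n := rfl
  rw [Npol, hzp, PowerSeries.coeff_mul, Finset.Nat.sum_antidiagonal_eq_sum_range_succ_mk]
  congr 1
  apply Finset.sum_congr rfl
  intro k _
  rw [coeff_LtS_pow]
  have h1 : PowerSeries.coeff (R := ℚ) (l - k) (onePlusPow (-(c * n))) =
      gchoose (-((n:ℚ) * c)) (l - k) := by
    rw [onePlusPow, PowerSeries.coeff_mk, gchoose, mul_comm c]
  rw [h1, show k + n = n + k from add_comm k n]
  rw [show n + k = k + n from add_comm n k]
  ring
end

section
/- Let α be a positive integer and define Euler polynomials of order α by (2/(e^t+1))^α e^{xt} = ∑_{n≥0} E_n^{(α)}(x) t^n/n!, and Narumi numbers by (log(1+t)/t)^n = ∑_{l≥0} N_l^{(n)} t^l/l!. For n ≥ 1, the polynomial Sₙ(x) := (2/(e^t+1))^α · x · (log(1+t)/t)^n x^{n-1} (operator formula, with power series in t acting as differential operators on polynomials) satisfies Sₙ(x) = ∑_{l=0}^{n-1} C(n-1,l) N_l^{(n)} E_{n-l}^{(α)}(x). -/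
open PowerSeries Nat

lemma act_eq_range (f : PowerSeries ℚ) (p : Polynomial ℚ) (N : ℕ) (h : p.natDegree < N) :
    act f p = ∑ k ∈ Finset.range N, PowerSeries.coeff (R := ℚ) k f • (⇑Polynomial.derivative)^[k] p := by
  unfold act
  refine Finset.sum_subset (Finset.range_subset_range.mpr h) fun k _ hk => ?_
  rw [Polynomial.iterate_derivative_eq_zero (by simp at hk; omega), smul_zero]

lemma polyOf_eq_sum (f : PowerSeries ℚ) (m : ℕ) :
    polyOf f m = ∑ k ∈ Finset.range (m+1),
      (PowerSeries.coeff (R := ℚ) k f * (m.descFactorial k : ℚ)) • Polynomial.X ^ (m - k) := by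
  unfold polyOf expPoly
  rw [PowerSeries.coeff_mul, Finset.Nat.sum_antidiagonal_eq_sum_range_succ_mk, Finset.smul_sum]
  refine Finset.sum_congr rfl fun k hk => ?_
  have hk' : k ≤ m := Nat.lt_succ_iff.mp (Finset.mem_range.mp hk)
  rw [PowerSeries.coeff_map, PowerSeries.coeff_mk]
  have hd : ((m - k)! : ℚ) * (m.descFactorial k : ℚ) = (m ! : ℚ) := by
    rw [← Nat.cast_mul, Nat.factorial_mul_descFactorial hk']
  rw [Polynomial.smul_eq_C_mul, Polynomial.smul_eq_C_mul, Polynomial.smul_eq_C_mul,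
    ← mul_assoc, ← map_mul, ← mul_assoc, ← map_mul]
  congr 2
  field_simp
  linear_combination (-PowerSeries.coeff (R := ℚ) k f) * hd

lemma act_X_pow (f : PowerSeries ℚ) (m : ℕ) :
    act f (Polynomial.X ^ m) = polyOf f m := by
  rw [polyOf_eq_sum]
  unfold act
  rw [Polynomial.natDegree_X_pow]
  refine Finset.sum_congr rfl fun k hk => ?_
  rw [Polynomial.iterate_derivative_X_pow_eq_smul, smul_smul]

theorem stmt13 (α : ℕ) (hα : 0 < α) (n : ℕ) (hn : 1 ≤ n) :
    act (Eser α) (Polynomial.X * act (LtS ^ n) (Polynomial.X ^ (n - 1))) =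
      ∑ l ∈ Finset.range n, (((n - 1).choose l : ℚ) * Nnum n l) • Epol α (n - l) := by
  obtain ⟨m, rfl⟩ : ∃ m, n = m + 1 := ⟨n - 1, (Nat.succ_pred_eq_of_pos hn).symm⟩
  simp only [Nat.add_sub_cancel]
  have h1 : Polynomial.X * act (LtS ^ (m+1)) (Polynomial.X ^ m) =
      ∑ l ∈ Finset.range (m+1),
        (PowerSeries.coeff (R := ℚ) l (LtS ^ (m+1)) * (m.descFactorial l : ℚ)) •
          Polynomial.X ^ (m + 1 - l) := by
    unfold act
    rw [Polynomial.natDegree_X_pow, Finset.mul_sum]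
    refine Finset.sum_congr rfl fun l hl => ?_
    have hl' : l ≤ m := Nat.lt_succ_iff.mp (Finset.mem_range.mp hl)
    rw [Polynomial.iterate_derivative_X_pow_eq_smul, smul_smul, mul_smul_comm]
    congr 1
    rw [show m + 1 - l = (m - l) + 1 by omega]
    ring
  rw [h1]
  set q : Polynomial ℚ := ∑ l ∈ Finset.range (m+1),
        (PowerSeries.coeff (R := ℚ) l (LtS ^ (m+1)) * (m.descFactorial l : ℚ)) •
          Polynomial.X ^ (m + 1 - l) with hq
  have hdeg : q.natDegree < m + 2 := by
    refine Nat.lt_succ_of_le (Polynomial.natDegree_sum_le_of_forall_le _ _ fun l hl => ?_)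
    exact (Polynomial.natDegree_smul_le _ _).trans (by simp)
  rw [act_eq_range _ _ _ hdeg]
  have h2 : ∀ k, (⇑Polynomial.derivative)^[k] q =
      ∑ l ∈ Finset.range (m+1),
        (PowerSeries.coeff (R := ℚ) l (LtS ^ (m+1)) * (m.descFactorial l : ℚ)) •
          (⇑Polynomial.derivative)^[k] (Polynomial.X ^ (m + 1 - l)) := by
    intro k
    rw [hq]
    induction k with
    | zero => simp
    | succ k ih => rw [Function.iterate_succ_apply', ih, Polynomial.derivative_sum]
                   simp [Function.iterate_succ_apply']
  simp only [h2, Finset.smul_sum]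
  rw [Finset.sum_comm]
  refine Finset.sum_congr rfl fun l hl => ?_
  have hl' : l ≤ m := Nat.lt_succ_iff.mp (Finset.mem_range.mp hl)
  have : ∑ k ∈ Finset.range (m+2), PowerSeries.coeff (R := ℚ) k (Eser α) •
      ((PowerSeries.coeff (R := ℚ) l (LtS ^ (m+1)) * (m.descFactorial l : ℚ)) •
        (⇑Polynomial.derivative)^[k] (Polynomial.X ^ (m + 1 - l))) =
      (PowerSeries.coeff (R := ℚ) l (LtS ^ (m+1)) * (m.descFactorial l : ℚ)) •
        act (Eser α) (Polynomial.X ^ (m + 1 - l)) := by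
    rw [act_eq_range _ _ (m+2) (by rw [Polynomial.natDegree_X_pow]; omega), Finset.smul_sum]
    refine Finset.sum_congr rfl fun k _ => ?_
    rw [smul_comm]
  rw [this, act_X_pow]
  unfold Epol Nnum
  congr 1
  rw [Nat.descFactorial_eq_factorial_mul_choose]
  push_cast
  ring
end
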